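/- Let N ≥ 1 and M ≥ 0. Let q_1,…,q_M ∈ ℂ[z_1,…,z_N] be arbitrary polynomials, and for each j ∈ {1,…,N} let r_j(z) = ∏_{k=1}^{p_j} (z_j − a_{j,k}) with p_j ≥ 1 and integers a_{j,1},…,a_{j,p_j}. Then the set F = {z ∈ ℤ^N | q_k(z) = 0 for all k ∈ {1,…,M} and r_j(z) = 0 for all j ∈ {1,…,N}} is nonempty if and only if the constant polynomial 1 does not belong to the ideal of ℂ[z_1,…,z_N] generated by q_1,…,q_M, r_1,…,r_N. -/

import Mathlib

open MvPolynomial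

/-- The polynomial `r_j = ∏_{k=1}^{p_j} (z_j - a_{j,k})` with integer roots. -/
noncomputable def rPoly (N : ℕ) (p : Fin N → ℕ) (a : (j : Fin N) → Fin (p j) → ℤ)
    (j : Fin N) : MvPolynomial (Fin N) ℂ :=
  ∏ k : Fin (p j), (X j - C ((a j k : ℤ) : ℂ))

/-- **ideal-membership content of Theorem 3.** The set
`F = {z ∈ ℤ^N | q_k(z) = 0 ∀k, r_j(z) = 0 ∀j}` is nonempty if and only if the constant
polynomial `1` does not belong to the ideal of `ℂ[z_1,…,z_N]` generated by
`q_1,…,q_M, r_1,…,r_N`. -/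
theorem F_nonempty_iff_one_not_mem_ideal (N M : ℕ) (hN : 1 ≤ N)
    (q : Fin M → MvPolynomial (Fin N) ℂ)
    (p : Fin N → ℕ) (hp : ∀ j, 1 ≤ p j)
    (a : (j : Fin N) → Fin (p j) → ℤ) :
    (∃ z : Fin N → ℤ,
        (∀ k : Fin M, eval (fun i => ((z i : ℤ) : ℂ)) (q k) = 0) ∧
        (∀ j : Fin N, eval (fun i => ((z i : ℤ) : ℂ)) (rPoly N p a j) = 0))
      ↔ (1 : MvPolynomial (Fin N) ℂ) ∉
          Ideal.span (Set.range q ∪ Set.range (rPoly N p a)) := by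
  constructor
  · rintro ⟨z, hq, hr⟩ h1
    have hall : Ideal.span (Set.range q ∪ Set.range (rPoly N p a)) ≤
        RingHom.ker (eval (fun i => ((z i : ℤ) : ℂ))) := by
      rw [Ideal.span_le]
      rintro f (⟨k, rfl⟩ | ⟨j, rfl⟩)
      · exact hq k
      · exact hr j
    have := hall h1
    simp [RingHom.mem_ker] at this
  · intro h1
    have hne : Ideal.span (Set.range q ∪ Set.range (rPoly N p a)) ≠ ⊤ := by
      intro h; exact h1 (h ▸ Submodule.mem_top)
    obtain ⟨Mx, hMx, hle⟩ := Ideal.exists_le_maximal _ hne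
    obtain ⟨x, rfl⟩ := (MvPolynomial.isMaximal_iff_eq_vanishingIdeal_singleton (I := Mx)).mp hMx
    have hzero : ∀ f ∈ Ideal.span (Set.range q ∪ Set.range (rPoly N p a)), eval x f = 0 := by
      intro f hf
      exact (MvPolynomial.mem_vanishingIdeal_singleton_iff x f).mp (hle hf)
    have hr : ∀ j : Fin N, ∃ k : Fin (p j), x j = ((a j k : ℤ) : ℂ) := by
      intro j
      have : eval x (rPoly N p a j) = 0 :=
        hzero _ (Ideal.subset_span (Or.inr ⟨j, rfl⟩))
      rw [rPoly, map_prod] at this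
      obtain ⟨k, _, hk⟩ := Finset.prod_eq_zero_iff.mp this
      refine ⟨k, ?_⟩
      have := hk
      simp only [map_sub, eval_X, eval_C, sub_eq_zero] at this
      exact this
    choose z hz using hr
    refine ⟨fun j => a j (z j), ?_, ?_⟩
    · intro k
      have hx : (fun i => ((a i (z i) : ℤ) : ℂ)) = x := by
        funext i; exact (hz i).symm
      rw [hx]
      exact hzero _ (Ideal.subset_span (Or.inl ⟨k, rfl⟩))
    · intro j
      have hx : (fun i => ((a i (z i) : ℤ) : ℂ)) = x := by
        funext i; exact (hz i).symm
      rw [hx]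
      exact hzero _ (Ideal.subset_span (Or.inr ⟨j, rfl⟩))
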